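/- Lemma (set B). Let q ∈ Prob({0,1}²) and μ := μ₂. Then the set B := {(π₁, χ^{(1)}_{1|1}, χ^{(2)}_{1|1}) : (π,χ) ∈ Θ₂, μ(π,χ) = q} is nonempty and equals the set of all (Pr, Se₁, Se₂) ∈ [0,1]³ satisfying: −q₁₀ ≤ Pr·(Se₂−Se₁) ≤ q₀₁; −q₀₀ ≤ Pr·(Se₁+Se₂−1) ≤ q₁₁; Pr − q_{0+} ≤ Pr·Se₁ ≤ q_{1+}; and Pr − q_{+0} ≤ Pr·Se₂ ≤ q_{+1}. -/

import Mathlib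

open scoped BigOperators

noncomputable section

set_option maxHeartbeats 1000000

/-- `p` is a discrete probability density on the finite set `X`,
i.e. a function `X → [0,1]` summing to `1`. -/
def IsProb {X : Type*} [Fintype X] (p : X → ℝ) : Prop :=
  (∀ x, 0 ≤ p x ∧ p x ≤ 1) ∧ ∑ x, p x = 1

/-- `χ` is a Markov transition density: `χ x` is a probability density for each `x`. -/
def IsMarkov {X Y : Type*} [Fintype Y] (χ : X → Y → ℝ) : Prop :=
  ∀ x, IsProb (χ x)

/-- The mixture density `μ₁(π,χ)` on `{0,1}` (indices: `χ i j = χ_{j|i}`). -/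
def mu1 (π : Fin 2 → ℝ) (χ : Fin 2 → Fin 2 → ℝ) : Fin 2 → ℝ :=
  fun j => ∑ i, π i * χ i j

/-- The mixture density `μ₂(π,χ)` on `{0,1}²` (indices: `χ i j = χ_{j|i}`). -/
def mu2 (π : Fin 2 → ℝ) (χ : Fin 2 → Fin 2 × Fin 2 → ℝ) : Fin 2 × Fin 2 → ℝ :=
  fun j => ∑ i, π i * χ i j

/-- First-test characteristic: `chi1 χ i ι = χ^{(1)}_{ι|i} = χ_{ι0|i} + χ_{ι1|i}`. -/
def chi1 (χ : Fin 2 → Fin 2 × Fin 2 → ℝ) : Fin 2 → Fin 2 → ℝ :=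
  fun i ι => χ i (ι, 0) + χ i (ι, 1)

/-- Second-test characteristic: `chi2 χ i ι = χ^{(2)}_{ι|i} = χ_{0ι|i} + χ_{1ι|i}`. -/
def chi2 (χ : Fin 2 → Fin 2 × Fin 2 → ℝ) : Fin 2 → Fin 2 → ℝ :=
  fun i ι => χ i (0, ι) + χ i (1, ι)

/-- The multinomial point mass `M_{n,q}({k}) = n! ∏_x q_x^{k_x}/k_x!`. -/
def mPMF {X : Type*} [Fintype X] (n : ℕ) (q : X → ℝ) (k : X → ℕ) : ℝ :=
  (n.factorial : ℝ) * ∏ x, q x ^ k x / ((k x).factorial : ℝ)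

/-- `mProb n q S` is the probability, under the multinomial distribution `M_{n,q}`
(supported on `{k : Σ_x k_x = n}`), of the event `S`. -/
def mProb {X : Type*} [Fintype X] (n : ℕ) (q : X → ℝ) (S : Set (X → ℕ)) : ℝ :=
  ∑' k : X → ℕ, Set.indicator {k | (∑ x, k x) = n ∧ k ∈ S} (mPMF n q) k

/-! ### Auxiliary material -/

/-- The probability vector `(1-t, t)` on `{0,1}`. -/
def vecP (t : ℝ) : Fin 2 → ℝ := ![1 - t, t]

/-- A function on `{0,1}²` given by the four values `a b c d`. -/
def mat4 (a b c d : ℝ) : Fin 2 × Fin 2 → ℝ := fun p => ![![a, b], ![c, d]] p.1 p.2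

lemma isProb_vecP {t : ℝ} (h0 : 0 ≤ t) (h1 : t ≤ 1) : IsProb (vecP t) := by
  constructor
  · intro x; fin_cases x <;> constructor <;> simp [vecP] <;> linarith
  · simp [vecP, Fin.sum_univ_two]

lemma isProb_mat4 {a b c d : ℝ} (ha : 0 ≤ a) (hb : 0 ≤ b) (hc : 0 ≤ c) (hd : 0 ≤ d)
    (hs : a + b + c + d = 1) : IsProb (mat4 a b c d) := by
  constructor
  · intro p; fin_cases p <;> constructor <;> simp [mat4] <;> linarith
  · simp [mat4, Fintype.sum_prod_type, Fin.sum_univ_two]; linarith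

lemma mu2_eval (p : ℝ) (f g : Fin 2 × Fin 2 → ℝ) (j : Fin 2 × Fin 2) :
    mu2 (vecP p) ![f, g] j = (1 - p) * f j + p * g j := by
  simp [mu2, vecP, Fin.sum_univ_two]

lemma qsum (q : Fin 2 × Fin 2 → ℝ) (h : IsProb q) :
    q (0,0) + q (0,1) + (q (1,0) + q (1,1)) = 1 := by
  have := h.2
  simpa [Fintype.sum_prod_type, Fin.sum_univ_two] using this

/-- Key combinatorial step: the `a`-values exist. -/
lemma exists_avals (A B C D Pr S T : ℝ)
    (hA : 0 ≤ A) (hB : 0 ≤ B) (hC : 0 ≤ C) (hD : 0 ≤ D)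
    (hsum : A + B + C + D = 1)
    (hP0 : 0 < Pr) (hP1 : Pr < 1)
    (hS0 : 0 ≤ S) (hSP : S ≤ Pr) (hT0 : 0 ≤ T) (hTP : T ≤ Pr)
    (h1 : -C ≤ T - S) (h2 : T - S ≤ B)
    (h3 : -A ≤ S + T - Pr) (h4 : S + T - Pr ≤ D)
    (h5 : Pr - (A + B) ≤ S) (h6 : S ≤ C + D)
    (h7 : Pr - (A + C) ≤ T) (h8 : T ≤ B + D) :
    ∃ a00 a01 a10 a11 : ℝ,
      (0 ≤ a00 ∧ a00 ≤ A ∧ A - (1 - Pr) ≤ a00) ∧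
      (0 ≤ a01 ∧ a01 ≤ B ∧ B - (1 - Pr) ≤ a01) ∧
      (0 ≤ a10 ∧ a10 ≤ C ∧ C - (1 - Pr) ≤ a10) ∧
      (0 ≤ a11 ∧ a11 ≤ D ∧ D - (1 - Pr) ≤ a11) ∧
      a00 + a01 + a10 + a11 = Pr ∧ a10 + a11 = S ∧ a01 + a11 = T := by
  set m00 := max 0 (A - (1 - Pr)) with hm00
  set m01 := max 0 (B - (1 - Pr)) with hm01
  set m10 := max 0 (C - (1 - Pr)) with hm10
  set m11 := max 0 (D - (1 - Pr)) with hm11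
  have d00 : m00 = 0 ∨ m00 = A - (1 - Pr) := by
    rcases le_total (A - (1 - Pr)) 0 with h | h
    exacts [Or.inl (max_eq_left h), Or.inr (max_eq_right h)]
  have d01 : m01 = 0 ∨ m01 = B - (1 - Pr) := by
    rcases le_total (B - (1 - Pr)) 0 with h | h
    exacts [Or.inl (max_eq_left h), Or.inr (max_eq_right h)]
  have d10 : m10 = 0 ∨ m10 = C - (1 - Pr) := by
    rcases le_total (C - (1 - Pr)) 0 with h | h
    exacts [Or.inl (max_eq_left h), Or.inr (max_eq_right h)]
  have d11 : m11 = 0 ∨ m11 = D - (1 - Pr) := by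
    rcases le_total (D - (1 - Pr)) 0 with h | h
    exacts [Or.inl (max_eq_left h), Or.inr (max_eq_right h)]
  have hm00l : 0 ≤ m00 := le_max_left _ _
  have hm00r : A - (1 - Pr) ≤ m00 := le_max_right _ _
  have hm01l : 0 ≤ m01 := le_max_left _ _
  have hm01r : B - (1 - Pr) ≤ m01 := le_max_right _ _
  have hm10l : 0 ≤ m10 := le_max_left _ _
  have hm10r : C - (1 - Pr) ≤ m10 := le_max_right _ _
  have hm11l : 0 ≤ m11 := le_max_left _ _
  have hm11r : D - (1 - Pr) ≤ m11 := le_max_right _ _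
  set v := max (max m11 (S - C)) (max (T - B) (S + T - Pr + m00)) with hv
  have hL1 : m11 ≤ v := le_trans (le_max_left _ _) (le_max_left _ _)
  have hL2 : S - C ≤ v := le_trans (le_max_right _ _) (le_max_left _ _)
  have hL3 : T - B ≤ v := le_trans (le_max_left _ _) (le_max_right _ _)
  have hL4 : S + T - Pr + m00 ≤ v := le_trans (le_max_right _ _) (le_max_right _ _)
  have hU1 : v ≤ D := by
    rw [hv]
    rcases d00 with e00 | e00 <;> rcases d11 with e11 | e11 <;>
      exact max_le (max_le (by linarith) (by linarith)) (max_le (by linarith) (by linarith))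
  have hU2 : v ≤ S - m10 := by
    rw [hv]
    rcases d00 with e00 | e00 <;> rcases d10 with e10 | e10 <;> rcases d11 with e11 | e11 <;>
      exact max_le (max_le (by linarith) (by linarith)) (max_le (by linarith) (by linarith))
  have hU3 : v ≤ T - m01 := by
    rw [hv]
    rcases d00 with e00 | e00 <;> rcases d01 with e01 | e01 <;> rcases d11 with e11 | e11 <;>
      exact max_le (max_le (by linarith) (by linarith)) (max_le (by linarith) (by linarith))
  have hU4 : v ≤ S + T - Pr + A := by
    rw [hv]
    rcases d00 with e00 | e00 <;> rcases d11 with e11 | e11 <;>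
      exact max_le (max_le (by linarith) (by linarith)) (max_le (by linarith) (by linarith))
  refine ⟨Pr - S - T + v, T - v, S - v, v, ?_, ?_, ?_, ?_, by ring, by ring, by ring⟩
  · exact ⟨by linarith, by linarith, by linarith⟩
  · exact ⟨by linarith, by linarith, by linarith⟩
  · exact ⟨by linarith, by linarith, by linarith⟩
  · exact ⟨by linarith, by linarith, by linarith⟩

/-- Backward inclusion: construction of `(π,χ)` from a triple satisfying the inequalities. -/
lemma backward (q : Fin 2 × Fin 2 → ℝ) (hq : IsProb q) (Pr Se1 Se2 : ℝ)
    (hP : Pr ∈ Set.Icc (0:ℝ) 1) (hS1 : Se1 ∈ Set.Icc (0:ℝ) 1) (hS2 : Se2 ∈ Set.Icc (0:ℝ) 1)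
    (h1 : -q (1, 0) ≤ Pr * (Se2 - Se1)) (h2 : Pr * (Se2 - Se1) ≤ q (0, 1))
    (h3 : -q (0, 0) ≤ Pr * (Se1 + Se2 - 1)) (h4 : Pr * (Se1 + Se2 - 1) ≤ q (1, 1))
    (h5 : Pr - (q (0, 0) + q (0, 1)) ≤ Pr * Se1) (h6 : Pr * Se1 ≤ q (1, 0) + q (1, 1))
    (h7 : Pr - (q (0, 0) + q (1, 0)) ≤ Pr * Se2) (h8 : Pr * Se2 ≤ q (0, 1) + q (1, 1)) :
    ∃ π : Fin 2 → ℝ, ∃ χ : Fin 2 → Fin 2 × Fin 2 → ℝ,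
      IsProb π ∧ IsMarkov χ ∧ mu2 π χ = q ∧
      (Pr, Se1, Se2) = (π 1, chi1 χ 1 1, chi2 χ 1 1) := by
  obtain ⟨hP0, hP1⟩ := hP
  obtain ⟨hS10, hS11⟩ := hS1
  obtain ⟨hS20, hS21⟩ := hS2
  have hq00 := (hq.1 (0,0)).1
  have hq01 := (hq.1 (0,1)).1
  have hq10 := (hq.1 (1,0)).1
  have hq11 := (hq.1 (1,1)).1
  have hqs := qsum q hq
  rcases eq_or_lt_of_le hP0 with hPr0 | hPr0
  · -- Pr = 0
    set r := max 0 (Se1 + Se2 - 1) with hr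
    have hr0 : 0 ≤ r := le_max_left _ _
    have hr1 : Se1 + Se2 - 1 ≤ r := le_max_right _ _
    have hr2 : r ≤ Se1 := max_le hS10 (by linarith)
    have hr3 : r ≤ Se2 := max_le hS20 (by linarith)
    refine ⟨vecP 0, ![q, mat4 (1 - Se1 - Se2 + r) (Se2 - r) (Se1 - r) r],
      isProb_vecP le_rfl zero_le_one, ?_, ?_, ?_⟩
    · intro i; fin_cases i
      · simpa using hq
      · simp only [Matrix.cons_val_one, Matrix.head_cons]
        exact isProb_mat4 (by linarith) (by linarith) (by linarith) hr0 (by ring)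
    · funext j; rw [mu2_eval]; ring
    · have e1 : chi1 ![q, mat4 (1 - Se1 - Se2 + r) (Se2 - r) (Se1 - r) r] 1 1
          = (Se1 - r) + r := rfl
      have e2 : chi2 ![q, mat4 (1 - Se1 - Se2 + r) (Se2 - r) (Se1 - r) r] 1 1
          = (Se2 - r) + r := rfl
      have e3 : vecP 0 1 = (0:ℝ) := rfl
      rw [e1, e2, e3, ← hPr0]
      norm_num
  rcases eq_or_lt_of_le hP1 with hPr1 | hPr1
  · -- Pr = 1
    have e1 : Se1 = q (1,0) + q (1,1) := by nlinarith
    have e2 : Se2 = q (0,1) + q (1,1) := by nlinarith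
    refine ⟨vecP 1, ![q, q], isProb_vecP zero_le_one le_rfl, ?_, ?_, ?_⟩
    · intro i; fin_cases i <;> simpa using hq
    · funext j; rw [mu2_eval]; ring
    · have e3 : chi1 ![q, q] 1 1 = q (1,0) + q (1,1) := rfl
      have e4 : chi2 ![q, q] 1 1 = q (0,1) + q (1,1) := rfl
      rw [e3, e4, e1, e2, hPr1]
      rfl
  · -- 0 < Pr < 1
    have hPne : Pr ≠ 0 := ne_of_gt hPr0
    have h1P : (0:ℝ) < 1 - Pr := by linarith
    have h1Pne : (1:ℝ) - Pr ≠ 0 := ne_of_gt h1P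
    have hS0' : 0 ≤ Pr * Se1 := mul_nonneg hP0 hS10
    have hSP' : Pr * Se1 ≤ Pr := by nlinarith
    have hT0' : 0 ≤ Pr * Se2 := mul_nonneg hP0 hS20
    have hTP' : Pr * Se2 ≤ Pr := by nlinarith
    obtain ⟨a00, a01, a10, a11, ⟨f00a, f00b, f00c⟩, ⟨f01a, f01b, f01c⟩,
        ⟨f10a, f10b, f10c⟩, ⟨f11a, f11b, f11c⟩, fsum, fS, fT⟩ :=
      exists_avals (q (0,0)) (q (0,1)) (q (1,0)) (q (1,1)) Pr (Pr * Se1) (Pr * Se2)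
        hq00 hq01 hq10 hq11 (by linarith) hPr0 hPr1 hS0' hSP' hT0' hTP'
        (by nlinarith) (by nlinarith) (by nlinarith) (by nlinarith)
        h5 h6 h7 h8
    refine ⟨vecP Pr,
      ![mat4 ((q (0,0) - a00) / (1 - Pr)) ((q (0,1) - a01) / (1 - Pr))
             ((q (1,0) - a10) / (1 - Pr)) ((q (1,1) - a11) / (1 - Pr)),
        mat4 (a00 / Pr) (a01 / Pr) (a10 / Pr) (a11 / Pr)],
      isProb_vecP hP0 hP1, ?_, ?_, ?_⟩
    · intro i; fin_cases i
      · simp only [Matrix.cons_val_zero]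
        refine isProb_mat4 (div_nonneg (by linarith) h1P.le) (div_nonneg (by linarith) h1P.le)
          (div_nonneg (by linarith) h1P.le) (div_nonneg (by linarith) h1P.le) ?_
        rw [← add_div, ← add_div, ← add_div, div_eq_iff h1Pne]
        linarith
      · simp only [Matrix.cons_val_one, Matrix.head_cons]
        refine isProb_mat4 (div_nonneg f00a hPr0.le) (div_nonneg f01a hPr0.le)
          (div_nonneg f10a hPr0.le) (div_nonneg f11a hPr0.le) ?_
        rw [← add_div, ← add_div, ← add_div, div_eq_iff hPne]
        linarith
    · funext j
      rw [mu2_eval]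
      rcases j with ⟨i, k⟩
      fin_cases i <;> fin_cases k <;>
        · simp only [mat4, Fin.zero_eta, Fin.mk_one, Matrix.cons_val_zero, Matrix.cons_val_one, Matrix.head_cons]
          field_simp
          ring
    · have e1 : chi1 ![mat4 ((q (0,0) - a00) / (1 - Pr)) ((q (0,1) - a01) / (1 - Pr))
             ((q (1,0) - a10) / (1 - Pr)) ((q (1,1) - a11) / (1 - Pr)),
          mat4 (a00 / Pr) (a01 / Pr) (a10 / Pr) (a11 / Pr)] 1 1 = a10 / Pr + a11 / Pr := rfl
      have e2 : chi2 ![mat4 ((q (0,0) - a00) / (1 - Pr)) ((q (0,1) - a01) / (1 - Pr))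
             ((q (1,0) - a10) / (1 - Pr)) ((q (1,1) - a11) / (1 - Pr)),
          mat4 (a00 / Pr) (a01 / Pr) (a10 / Pr) (a11 / Pr)] 1 1 = a01 / Pr + a11 / Pr := rfl
      have e3 : vecP Pr 1 = Pr := rfl
      rw [e1, e2, e3, ← add_div, ← add_div, fS, fT,
        mul_div_cancel_left₀ _ hPne, mul_div_cancel_left₀ _ hPne]

/-- Forward inclusion. -/
lemma forward (q : Fin 2 × Fin 2 → ℝ)
    (Pr Se1 Se2 : ℝ) (π : Fin 2 → ℝ) (χ : Fin 2 → Fin 2 × Fin 2 → ℝ)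
    (hπ : IsProb π) (hχ : IsMarkov χ) (hμ : mu2 π χ = q)
    (hx : (Pr, Se1, Se2) = (π 1, chi1 χ 1 1, chi2 χ 1 1)) :
    Pr ∈ Set.Icc (0:ℝ) 1 ∧ Se1 ∈ Set.Icc (0:ℝ) 1 ∧ Se2 ∈ Set.Icc (0:ℝ) 1 ∧
    -q (1, 0) ≤ Pr * (Se2 - Se1) ∧ Pr * (Se2 - Se1) ≤ q (0, 1) ∧
    -q (0, 0) ≤ Pr * (Se1 + Se2 - 1) ∧ Pr * (Se1 + Se2 - 1) ≤ q (1, 1) ∧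
    Pr - (q (0, 0) + q (0, 1)) ≤ Pr * Se1 ∧ Pr * Se1 ≤ q (1, 0) + q (1, 1) ∧
    Pr - (q (0, 0) + q (1, 0)) ≤ Pr * Se2 ∧ Pr * Se2 ≤ q (0, 1) + q (1, 1) := by
  obtain ⟨h1, h2, h3⟩ : Pr = π 1 ∧ Se1 = chi1 χ 1 1 ∧ Se2 = chi2 χ 1 1 := by
    simpa [Prod.ext_iff] using hx
  subst h1; subst h2; subst h3
  simp only [chi1, chi2, Set.mem_Icc]
  obtain ⟨hπ00, hπ01⟩ := hπ.1 0
  obtain ⟨hπ10, hπ11⟩ := hπ.1 1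
  have hπs : π 0 + π 1 = 1 := by simpa [Fin.sum_univ_two] using hπ.2
  have hs1 : χ 1 (0,0) + χ 1 (0,1) + (χ 1 (1,0) + χ 1 (1,1)) = 1 := by
    simpa [Fintype.sum_prod_type, Fin.sum_univ_two] using (hχ 1).2
  have hq' : ∀ j, π 0 * χ 0 j + π 1 * χ 1 j = q j := fun j => by
    rw [← hμ]; simp [mu2, Fin.sum_univ_two]
  have p1 : ∀ j, 0 ≤ π 1 * χ 1 j := fun j => mul_nonneg hπ10 ((hχ 1).1 j).1
  have p2 : ∀ j, π 1 * χ 1 j ≤ q j := fun j => by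
    have h := hq' j
    have := mul_nonneg hπ00 ((hχ 0).1 j).1
    linarith
  have psum : π 1 * χ 1 (0,0) + π 1 * χ 1 (0,1) + π 1 * χ 1 (1,0) + π 1 * χ 1 (1,1) = π 1 := by
    linear_combination π 1 * hs1
  have c00 := ((hχ 1).1 (0,0)).1
  have c01 := ((hχ 1).1 (0,1)).1
  have c10 := ((hχ 1).1 (1,0)).1
  have c11 := ((hχ 1).1 (1,1)).1
  have q00 := p1 (0,0); have q01 := p1 (0,1); have q10 := p1 (1,0); have q11 := p1 (1,1)
  have r00 := p2 (0,0); have r01 := p2 (0,1); have r10 := p2 (1,0); have r11 := p2 (1,1)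
  refine ⟨⟨hπ10, hπ11⟩, ⟨by linarith, by linarith⟩, ⟨by linarith, by linarith⟩,
    by nlinarith, by nlinarith, by nlinarith, by nlinarith,
    by nlinarith, by nlinarith, by nlinarith, by nlinarith⟩

/-- Lemma (set B): the set of triples `(Pr, Se₁, Se₂)` compatible with `q`. -/
theorem stmt_8 (q : Fin 2 × Fin 2 → ℝ) (hq : IsProb q) :
    Set.Nonempty {x : ℝ × ℝ × ℝ |
        ∃ π : Fin 2 → ℝ, ∃ χ : Fin 2 → Fin 2 × Fin 2 → ℝ,
          IsProb π ∧ IsMarkov χ ∧ mu2 π χ = q ∧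
          x = (π 1, chi1 χ 1 1, chi2 χ 1 1)} ∧
    {x : ℝ × ℝ × ℝ |
        ∃ π : Fin 2 → ℝ, ∃ χ : Fin 2 → Fin 2 × Fin 2 → ℝ,
          IsProb π ∧ IsMarkov χ ∧ mu2 π χ = q ∧
          x = (π 1, chi1 χ 1 1, chi2 χ 1 1)} =
    {x : ℝ × ℝ × ℝ |
        x.1 ∈ Set.Icc (0:ℝ) 1 ∧ x.2.1 ∈ Set.Icc (0:ℝ) 1 ∧ x.2.2 ∈ Set.Icc (0:ℝ) 1 ∧
        -q (1, 0) ≤ x.1 * (x.2.2 - x.2.1) ∧ x.1 * (x.2.2 - x.2.1) ≤ q (0, 1) ∧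
        -q (0, 0) ≤ x.1 * (x.2.1 + x.2.2 - 1) ∧ x.1 * (x.2.1 + x.2.2 - 1) ≤ q (1, 1) ∧
        x.1 - (q (0, 0) + q (0, 1)) ≤ x.1 * x.2.1 ∧ x.1 * x.2.1 ≤ q (1, 0) + q (1, 1) ∧
        x.1 - (q (0, 0) + q (1, 0)) ≤ x.1 * x.2.2 ∧ x.1 * x.2.2 ≤ q (0, 1) + q (1, 1)} := by
  constructor
  · refine ⟨(0, q (1,0) + q (1,1), q (0,1) + q (1,1)), vecP 0, ![q, q],
      isProb_vecP le_rfl zero_le_one, ?_, ?_, rfl⟩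
    · intro i; fin_cases i <;> simpa using hq
    · funext j; rw [mu2_eval]; ring
  · ext x
    obtain ⟨Pr, Se1, Se2⟩ := x
    simp only [Set.mem_setOf_eq]
    constructor
    · rintro ⟨π, χ, hπ, hχ, hμ, hx⟩
      exact forward q Pr Se1 Se2 π χ hπ hχ hμ hx
    · rintro ⟨hP, hS1, hS2, h1, h2, h3, h4, h5, h6, h7, h8⟩
      exact backward q hq Pr Se1 Se2 hP hS1 hS2 h1 h2 h3 h4 h5 h6 h7 h8

end
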